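/- Let K be an infinite field. The invariants tr(X_1²X_2X_3) and tr(X_1²X_3X_2) are linearly independent modulo decomposable invariants in R_{3,3}: if α, β ∈ K and α·tr(X_1²X_2X_3) + β·tr(X_1²X_3X_2) lies in the ideal (R_{3,3}⁺)², then α = β = 0. -/

import Mathlib

open Matrix MvPolynomial

noncomputable section

/-- Evaluation of a coordinate-ring element at a `d`-tuple of `n × n` matrices. -/
def evalPt {K : Type} [Field K] {n d : ℕ} (A : Fin d → Matrix (Fin n) (Fin n) K) :
    MvPolynomial (Fin d × Fin n × Fin n) K →+* K :=
  MvPolynomial.eval fun p => A p.1 p.2.1 p.2.2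

/-- The algebra of invariants `R_{n,d}` of `d`-tuples of `n × n` matrices under
simultaneous conjugation. -/
def invRing (K : Type) [Field K] (n d : ℕ) :
    Subalgebra K (MvPolynomial (Fin d × Fin n × Fin n) K) where
  carrier := {f | ∀ (g : GL (Fin n) K) (A : Fin d → Matrix (Fin n) (Fin n) K),
      evalPt (fun r => (g : Matrix (Fin n) (Fin n) K) * A r *
        ((↑g⁻¹ : Matrix (Fin n) (Fin n) K))) f = evalPt A f}
  add_mem' := by intro a b ha hb g A; simp only [map_add, ha g A, hb g A]
  mul_mem' := by intro a b ha hb g A; simp only [_root_.map_mul, ha g A, hb g A]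
  one_mem' := by intro g A; simp only [_root_.map_one]
  zero_mem' := by intro g A; simp only [map_zero]
  algebraMap_mem' := by intro r g A; simp [evalPt, MvPolynomial.algebraMap_eq]

/-- The generic `n × n` matrices `X_r`. -/
def genMat (K : Type) [Field K] (n d : ℕ) (r : Fin d) :
    Matrix (Fin n) (Fin n) (MvPolynomial (Fin d × Fin n × Fin n) K) :=
  Matrix.of fun i j => MvPolynomial.X (r, i, j)

/-- The trace of a word in the generic matrices. -/
def trW (K : Type) [Field K] (n d : ℕ) (w : List (Fin d)) :
    MvPolynomial (Fin d × Fin n × Fin n) K :=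
  Matrix.trace ((w.map (genMat K n d)).prod)

/-- `σ_k(M)`: the signed coefficients of the characteristic polynomial,
`det (λ E - M) = λ^n - σ_1(M) λ^{n-1} + ⋯ + (-1)^n σ_n(M)`. -/
def sigmaC {R : Type} [CommRing R] {n : ℕ} (k : ℕ) (M : Matrix (Fin n) (Fin n) R) : R :=
  (-1) ^ k * (Matrix.charpoly M).coeff (n - k)

/-- The set `R⁺` of invariants of positive degree (zero constant term). -/
def plusPart (K : Type) [Field K] (n d : ℕ) : Set (invRing K n d) :=
  {f | MvPolynomial.coeff 0 (f : MvPolynomial (Fin d × Fin n × Fin n) K) = 0}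

/-- The ideal `(R⁺)²` of the invariant ring `R = R_{n,d}`, generated by products of
two positive-degree invariants; its elements are the decomposable invariants. -/
def decIdeal (K : Type) [Field K] (n d : ℕ) : Ideal (invRing K n d) :=
  Ideal.span {x | ∃ a ∈ plusPart K n d, ∃ b ∈ plusPart K n d, x = a * b}

namespace LinIndepAux


variable {K : Type} [Field K]

lemma mapDomain_apply3 {ι κ : Type*} [DecidableEq κ] (F : ι → κ) (m : ι →₀ ℕ) (r : κ) :
    Finsupp.mapDomain F m r = ∑ p ∈ m.support, (if F p = r then m p else 0) := by
  rw [Finsupp.mapDomain, Finsupp.sum_apply, Finsupp.sum]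
  exact Finset.sum_congr rfl fun p _ => Finsupp.single_apply

lemma le_mapDomain3 {ι κ : Type*} [DecidableEq κ] (F : ι → κ) (m : ι →₀ ℕ) (p : ι) :
    m p ≤ Finsupp.mapDomain F m (F p) := by
  rw [mapDomain_apply3]
  by_cases hp : p ∈ m.support
  · have := Finset.single_le_sum (f := fun q => if F q = F p then m q else 0)
      (fun q _ => by positivity) hp
    simpa using this
  · simp [Finsupp.notMem_support_iff.mp hp]

variable (A : Fin 3 → Matrix (Fin 3) (Fin 3) K)

def Phi (A : Fin 3 → Matrix (Fin 3) (Fin 3) K) :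
    MvPolynomial (Fin 3 × Fin 3 × Fin 3) K →+* MvPolynomial (Fin 3) K :=
  eval₂Hom (C : K →+* MvPolynomial (Fin 3) K)
    (fun p => C (A p.1 p.2.1 p.2.2) * X p.1)

lemma phi_monomial (m : (Fin 3 × Fin 3 × Fin 3) →₀ ℕ) (c : K) :
    Phi A (monomial m c) = monomial (Finsupp.mapDomain Prod.fst m)
      (c * m.prod fun p k => A p.1 p.2.1 p.2.2 ^ k) := by
  rw [Phi, eval₂Hom_monomial]
  have h1 : (m.prod fun p k => (C (A p.1 p.2.1 p.2.2) * X p.1) ^ k)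
      = C (m.prod fun p k => A p.1 p.2.1 p.2.2 ^ k)
        * m.prod (fun p k => (X p.1 : MvPolynomial (Fin 3) K) ^ k) := by
    rw [Finsupp.prod, Finsupp.prod, Finsupp.prod]
    calc ∏ p ∈ m.support, (C (A p.1 p.2.1 p.2.2) * X p.1) ^ m p
        = ∏ p ∈ m.support, (C (A p.1 p.2.1 p.2.2 ^ m p) * X p.1 ^ m p) :=
          Finset.prod_congr rfl fun p _ => by rw [mul_pow, map_pow]
      _ = (∏ p ∈ m.support, C (A p.1 p.2.1 p.2.2 ^ m p))
          * ∏ p ∈ m.support, (X p.1 : MvPolynomial (Fin 3) K) ^ m p :=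
          Finset.prod_mul_distrib
      _ = C (∏ p ∈ m.support, A p.1 p.2.1 p.2.2 ^ m p)
          * ∏ p ∈ m.support, (X p.1 : MvPolynomial (Fin 3) K) ^ m p := by
          rw [_root_.map_prod]
  have h2 : (m.prod fun p k => (X p.1 : MvPolynomial (Fin 3) K) ^ k)
      = monomial (Finsupp.mapDomain Prod.fst m) (1 : K) := by
    rw [monomial_eq, _root_.map_one, one_mul]
    exact (Finsupp.prod_mapDomain_index (fun i => pow_zero _)
      (fun i k₁ k₂ => pow_add _ _ _)).symm
  rw [h1, h2, ← mul_assoc, ← _root_.map_mul, C_mul_monomial, mul_one]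

lemma phi_coeff (δ : Fin 3 →₀ ℕ) (f : MvPolynomial (Fin 3 × Fin 3 × Fin 3) K) :
    coeff δ (Phi A f) = ∑ m ∈ f.support,
      (if Finsupp.mapDomain Prod.fst m = δ
        then coeff m f * m.prod (fun p k => A p.1 p.2.1 p.2.2 ^ k) else 0) := by
  conv_lhs => rw [f.as_sum, map_sum, MvPolynomial.coeff_sum]
  exact Finset.sum_congr rfl fun m _ => by rw [phi_monomial, coeff_monomial]

lemma phi_coeff_zero (f : MvPolynomial (Fin 3 × Fin 3 × Fin 3) K) :
    coeff 0 (Phi A f) = coeff 0 f := by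
  rw [phi_coeff]
  have key : ∀ m : (Fin 3 × Fin 3 × Fin 3) →₀ ℕ,
      (Finsupp.mapDomain Prod.fst m = 0) ↔ m = 0 := by
    intro m
    constructor
    · intro hm; ext p
      have := le_mapDomain3 Prod.fst m p
      rw [hm] at this; simpa using this
    · rintro rfl; simp
  calc ∑ m ∈ f.support, (if Finsupp.mapDomain Prod.fst m = 0
        then coeff m f * m.prod (fun p k => A p.1 p.2.1 p.2.2 ^ k) else 0)
      = ∑ m ∈ f.support, (if m = 0
        then coeff m f * m.prod (fun p k => A p.1 p.2.1 p.2.2 ^ k) else 0) :=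
        Finset.sum_congr rfl fun m _ => by rw [if_congr (key m) rfl rfl]
    _ = if (0 : (Fin 3 × Fin 3 × Fin 3) →₀ ℕ) ∈ f.support
        then coeff 0 f * Finsupp.prod (0 : (Fin 3 × Fin 3 × Fin 3) →₀ ℕ)
          (fun p k => A p.1 p.2.1 p.2.2 ^ k) else 0 :=
        Finset.sum_ite_eq' f.support 0 _
    _ = coeff 0 f := by
        by_cases h : (0 : (Fin 3 × Fin 3 × Fin 3) →₀ ℕ) ∈ f.support
        · simp [h]
        · simp [h, MvPolynomial.notMem_support_iff.mp h]

lemma prod_zpow_sum {ι : Type*} (s : Finset ι) {u : K} (hu : u ≠ 0) (t : ι → ℤ) :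
    ∏ i ∈ s, u ^ t i = u ^ (∑ i ∈ s, t i) := by
  induction s using Finset.cons_induction with
  | empty => simp
  | cons a s ha ih => rw [Finset.prod_cons, Finset.sum_cons, ih, ← zpow_add₀ hu]

lemma phi_coeff_scale {u : K} (hu : u ≠ 0) (n : Fin 3 → ℤ) (ω : Fin 3 → ℤ)
    (B : Fin 3 → Matrix (Fin 3) (Fin 3) K) (δ : Fin 3 →₀ ℕ)
    (f : MvPolynomial (Fin 3 × Fin 3 × Fin 3) K)
    (hω : ∀ r, δ r ≠ 0 → ∀ i j, B r i j ≠ 0 → n i - n j = ω r) :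
    coeff δ (Phi (fun r => diagonal (fun i => u ^ n i) * B r * diagonal (fun i => u ^ (-n i))) f)
      = u ^ (∑ r, (δ r : ℤ) * ω r) * coeff δ (Phi B f) := by
  rw [phi_coeff, phi_coeff, Finset.mul_sum]
  apply Finset.sum_congr rfl
  intro m hm
  by_cases hmd : Finsupp.mapDomain Prod.fst m = δ
  · rw [if_pos hmd, if_pos hmd]
    have entry : ∀ p : Fin 3 × Fin 3 × Fin 3,
        (diagonal (fun i => u ^ n i) * B p.1 * diagonal (fun i => u ^ (-n i))) p.2.1 p.2.2
          = u ^ (n p.2.1 - n p.2.2) * B p.1 p.2.1 p.2.2 := by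
      intro p
      rw [Matrix.mul_diagonal, Matrix.diagonal_mul, sub_eq_add_neg, zpow_add₀ hu]
      ring
    by_cases hz : ∃ p ∈ m.support, B p.1 p.2.1 p.2.2 = 0
    · obtain ⟨p, hp, hBp⟩ := hz
      have hmp : m p ≠ 0 := Finsupp.mem_support_iff.mp hp
      have z1 : (m.prod fun p k =>
          (diagonal (fun i => u ^ n i) * B p.1 * diagonal (fun i => u ^ (-n i))) p.2.1 p.2.2 ^ k)
            = 0 := by
        rw [Finsupp.prod]
        exact Finset.prod_eq_zero hp (by rw [entry, hBp, mul_zero, zero_pow hmp])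
      have z2 : (m.prod fun p k => B p.1 p.2.1 p.2.2 ^ k) = 0 := by
        rw [Finsupp.prod]
        exact Finset.prod_eq_zero hp (by rw [hBp, zero_pow hmp])
      rw [z1, z2]; ring
    · push_neg at hz
      have key : ∀ p ∈ m.support, n p.2.1 - n p.2.2 = ω p.1 := by
        intro p hp
        have h1 : δ p.1 ≠ 0 := by
          have h2 := le_mapDomain3 Prod.fst m p
          rw [hmd] at h2
          have := Finsupp.mem_support_iff.mp hp
          omega
        exact hω p.1 h1 p.2.1 p.2.2 (hz p hp)
      have hsum : ∑ p ∈ m.support, ω p.1 * (m p : ℤ) = ∑ r, (δ r : ℤ) * ω r := by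
        have hδ : ∀ r : Fin 3, (δ r : ℤ) = ∑ p ∈ m.support, (if p.1 = r then (m p : ℤ) else 0) := by
          intro r
          rw [← hmd, mapDomain_apply3]
          push_cast
          exact Finset.sum_congr rfl fun p _ => by split <;> simp
        calc ∑ p ∈ m.support, ω p.1 * (m p : ℤ)
            = ∑ p ∈ m.support, ∑ r : Fin 3, (if p.1 = r then (m p : ℤ) * ω r else 0) := by
              apply Finset.sum_congr rfl
              intro p _
              rw [Finset.sum_ite_eq Finset.univ p.1 (fun r => (m p : ℤ) * ω r)]
              rw [if_pos (Finset.mem_univ _), mul_comm]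
          _ = ∑ r : Fin 3, ∑ p ∈ m.support, (if p.1 = r then (m p : ℤ) else 0) * ω r := by
              rw [Finset.sum_comm]
              exact Finset.sum_congr rfl fun r _ => Finset.sum_congr rfl fun p _ => by
                rw [ite_mul, zero_mul]
          _ = ∑ r, (δ r : ℤ) * ω r := by
              exact Finset.sum_congr rfl fun r _ => by rw [← Finset.sum_mul, ← hδ]
      have main : (m.prod fun p k =>
          (diagonal (fun i => u ^ n i) * B p.1 * diagonal (fun i => u ^ (-n i))) p.2.1 p.2.2 ^ k)
            = u ^ (∑ r, (δ r : ℤ) * ω r) * (m.prod fun p k => B p.1 p.2.1 p.2.2 ^ k) := by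
        rw [Finsupp.prod, Finsupp.prod, ← hsum, ← prod_zpow_sum m.support hu,
          ← Finset.prod_mul_distrib]
        apply Finset.prod_congr rfl
        intro p hp
        rw [entry p, key p hp, mul_pow, ← zpow_natCast (u ^ ω p.1) (m p), ← _root_.zpow_mul]
      rw [main]; ring
  · rw [if_neg hmd, if_neg hmd, mul_zero]

lemma phi_eval' (A : Fin 3 → Matrix (Fin 3) (Fin 3) K) (t : Fin 3 → K)
    (f : MvPolynomial (Fin 3 × Fin 3 × Fin 3) K) :
    eval t (Phi A f) = evalPt (fun r => t r • A r) f := by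
  have : (eval t).comp (Phi A) = (evalPt (fun r => t r • A r)) := by
    apply MvPolynomial.ringHom_ext
    · intro r; simp [Phi, evalPt]
    · intro p; simp [Phi, evalPt, Matrix.smul_apply, smul_eq_mul]; ring
  exact RingHom.congr_fun this f

lemma phi_conj [Infinite K] {f : MvPolynomial (Fin 3 × Fin 3 × Fin 3) K}
    (hf : f ∈ invRing K 3 3) (g : GL (Fin 3) K) (A : Fin 3 → Matrix (Fin 3) (Fin 3) K) :
    Phi (fun r => (g : Matrix (Fin 3) (Fin 3) K) * A r * (↑g⁻¹ : Matrix (Fin 3) (Fin 3) K)) f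
      = Phi A f := by
  apply MvPolynomial.funext
  intro t
  rw [phi_eval', phi_eval']
  have h1 : (fun r => t r • ((g : Matrix (Fin 3) (Fin 3) K) * A r
        * (↑g⁻¹ : Matrix (Fin 3) (Fin 3) K)))
      = fun r => (g : Matrix (Fin 3) (Fin 3) K) * (t r • A r)
        * (↑g⁻¹ : Matrix (Fin 3) (Fin 3) K) := by
    funext r
    rw [← smul_mul_assoc, ← mul_smul_comm]
  rw [h1]
  exact hf g (fun r => t r • A r)

/-- choice of a scalar avoiding roots of unity -/
lemma exists_good_unit [Infinite K] (T : ℕ) (hT : T ≠ 0) :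
    ∃ u : K, u ≠ 0 ∧ u ^ T ≠ 1 := by
  have hpoly : (Polynomial.X ^ T - Polynomial.C 1 : Polynomial K) ≠ 0 := by
    intro hzero
    have := congrArg (Polynomial.eval 0) hzero
    simp [zero_pow hT] at this
  have hfin : ({x : K | (Polynomial.X ^ T - Polynomial.C 1 : Polynomial K).IsRoot x}
      ∪ {0}).Finite :=
    Set.Finite.union (Polynomial.finite_setOf_isRoot hpoly) (Set.finite_singleton 0)
  obtain ⟨u, hu⟩ := (hfin.infinite_compl).nonempty
  simp only [Set.mem_compl_iff, Set.mem_union, Set.mem_setOf_eq, Set.mem_singleton_iff,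
    not_or, Polynomial.IsRoot] at hu
  refine ⟨u, hu.2, fun h1 => hu.1 ?_⟩
  simp [h1]

set_option maxHeartbeats 1000000 in
/-- the master vanishing lemma -/
lemma coeff_eq_zero [Infinite K] {f : MvPolynomial (Fin 3 × Fin 3 × Fin 3) K}
    (hf : f ∈ invRing K 3 3) (A : Fin 3 → Matrix (Fin 3) (Fin 3) K)
    (δ : Fin 3 →₀ ℕ) (g : GL (Fin 3) K) (n : Fin 3 → ℤ) (ω : Fin 3 → ℤ) (T : ℕ) (hT : T ≠ 0)
    (hTsum : ∑ r, (δ r : ℤ) * ω r = T)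
    (hω : ∀ r, δ r ≠ 0 → ∀ i j,
      ((g : Matrix (Fin 3) (Fin 3) K) * A r * (↑g⁻¹ : Matrix (Fin 3) (Fin 3) K)) i j ≠ 0
        → n i - n j = ω r) :
    coeff δ (Phi A f) = 0 := by
  obtain ⟨u, hu0, hu1⟩ := exists_good_unit (K := K) T hT
  set B : Fin 3 → Matrix (Fin 3) (Fin 3) K :=
    fun r => (g : Matrix (Fin 3) (Fin 3) K) * A r * (↑g⁻¹ : Matrix (Fin 3) (Fin 3) K) with hBdef
  have hB : Phi B f = Phi A f := phi_conj hf g A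
  have hval : ∀ i : Fin 3, u ^ n i * u ^ (-n i) = 1 := fun i => by
    rw [← zpow_add₀ hu0, add_neg_cancel, zpow_zero]
  have hval' : ∀ i : Fin 3, u ^ (-n i) * u ^ n i = 1 := fun i => by
    rw [← zpow_add₀ hu0, neg_add_cancel, zpow_zero]
  set Du : GL (Fin 3) K := ⟨diagonal (fun i => u ^ n i), diagonal (fun i => u ^ (-n i)),
    by rw [diagonal_mul_diagonal, show (fun i => u ^ n i * u ^ (-n i)) = fun _ => (1:K) from funext hval, diagonal_one], by rw [diagonal_mul_diagonal, show (fun i => u ^ (-n i) * u ^ n i) = fun _ => (1:K) from funext hval', diagonal_one]⟩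
    with hDu
  have h3 : (fun r => ((Du * g : GL (Fin 3) K) : Matrix (Fin 3) (Fin 3) K) * A r
        * (↑(Du * g)⁻¹ : Matrix (Fin 3) (Fin 3) K))
      = fun r => diagonal (fun i => u ^ n i) * B r * diagonal (fun i => u ^ (-n i)) := by
    funext r
    rw [_root_.mul_inv_rev]
    show ((Du : Matrix (Fin 3) (Fin 3) K) * (g : Matrix (Fin 3) (Fin 3) K)) * A r * ((↑g⁻¹ : Matrix (Fin 3) (Fin 3) K) * (↑Du⁻¹ : Matrix (Fin 3) (Fin 3) K)) = _
    have hDuinv : (↑Du⁻¹ : Matrix (Fin 3) (Fin 3) K) = diagonal (fun i => u ^ (-n i)) := rfl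
    rw [hDuinv, hBdef]
    show _ = diagonal (fun i => u ^ n i) * ((g : Matrix (Fin 3) (Fin 3) K) * A r * (↑g⁻¹ : Matrix (Fin 3) (Fin 3) K))
      * diagonal (fun i => u ^ (-n i))
    have hDuval : (↑Du : Matrix (Fin 3) (Fin 3) K) = diagonal (fun i => u ^ n i) := rfl
    rw [hDuval]
    noncomm_ring
  have h2 : Phi (fun r => diagonal (fun i => u ^ n i) * B r * diagonal (fun i => u ^ (-n i))) f
      = Phi A f := by
    rw [← h3]
    exact phi_conj hf (Du * g) A
  have h4 := phi_coeff_scale hu0 n ω B δ f (fun r hr i j hB => hω r hr i j hB)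
  rw [h2, hB, hTsum] at h4
  have h5 : (u : K) ^ ((T : ℕ) : ℤ) = u ^ T := zpow_natCast u T
  rw [h5] at h4
  by_contra hc
  have : u ^ T = 1 := by
    have := mul_right_cancel₀ hc (h4.symm.trans (one_mul _).symm)
    exact this
  exact hu1 this


/-! ### concrete matrices -/

def A1 (K : Type) [Field K] : Matrix (Fin 3) (Fin 3) K := !![0,0,0; 1,0,0; 0,1,0]
def A3 (K : Type) [Field K] : Matrix (Fin 3) (Fin 3) K := !![0,0,1; 0,0,0; 0,0,0]
def E01 (K : Type) [Field K] : Matrix (Fin 3) (Fin 3) K := !![0,1,0; 0,0,0; 0,0,0]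

def Apt (C2 : Matrix (Fin 3) (Fin 3) K) : Fin 3 → Matrix (Fin 3) (Fin 3) K :=
  ![A1 K, C2, A3 K]

def mu : Fin 3 →₀ ℕ :=
  Finsupp.single 0 2 + Finsupp.single 1 1 + Finsupp.single 2 1

lemma mu_apply0 : mu 0 = 2 := by simp [mu, Finsupp.single_apply]
lemma mu_apply1 : mu 1 = 1 := by simp [mu, Finsupp.single_apply]
lemma mu_apply2 : mu 2 = 1 := by simp [mu, Finsupp.single_apply]

lemma killA [Infinite K] {f : MvPolynomial (Fin 3 × Fin 3 × Fin 3) K}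
    (hf : f ∈ invRing K 3 3) (C2 : Matrix (Fin 3) (Fin 3) K) (δ : Fin 3 →₀ ℕ)
    (h1 : δ 1 = 0) (h2 : δ 2 = 0) (h0 : δ 0 ≠ 0) :
    coeff δ (Phi (Apt C2) f) = 0 := by
  apply coeff_eq_zero hf (Apt C2) δ 1 ![0,1,2] ![1,0,0] (δ 0) h0
  · rw [Fin.sum_univ_three]
    simp [h1, h2]
  · intro r hr i j hij
    fin_cases r
    · simp only [inv_one, Units.val_one, one_mul, mul_one] at hij
      have hA : Apt C2 ⟨0, by omega⟩ = A1 K := rfl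
      rw [hA] at hij
      fin_cases i <;> fin_cases j <;> simp [A1, Matrix.vecHead, Matrix.vecTail] at hij ⊢
    · exact absurd h1 hr
    · exact absurd h2 hr


lemma killB [Infinite K] {f : MvPolynomial (Fin 3 × Fin 3 × Fin 3) K}
    (hf : f ∈ invRing K 3 3) {C2 : Matrix (Fin 3) (Fin 3) K} (g : GL (Fin 3) K)
    (hg : (↑g : Matrix (Fin 3) (Fin 3) K) * C2 * (↑g⁻¹ : Matrix (Fin 3) (Fin 3) K) = E01 K)
    (δ : Fin 3 →₀ ℕ) (h0 : δ 0 = 0) (h2 : δ 2 = 0) (h1 : δ 1 ≠ 0) :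
    coeff δ (Phi (Apt C2) f) = 0 := by
  apply coeff_eq_zero hf (Apt C2) δ g ![1,0,0] ![0,1,0] (δ 1) h1
  · rw [Fin.sum_univ_three]
    simp [h0, h2]
  · intro r hr i j hij
    fin_cases r
    · exact absurd h0 hr
    · have hA : Apt C2 ⟨1, by omega⟩ = C2 := rfl
      rw [hA, hg] at hij
      fin_cases i <;> fin_cases j <;> simp [E01, Matrix.vecHead, Matrix.vecTail] at hij ⊢
    · exact absurd h2 hr

lemma killC [Infinite K] {f : MvPolynomial (Fin 3 × Fin 3 × Fin 3) K}
    (hf : f ∈ invRing K 3 3) (C2 : Matrix (Fin 3) (Fin 3) K) (δ : Fin 3 →₀ ℕ)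
    (h0 : δ 0 = 0) (h1 : δ 1 = 0) (h2 : δ 2 ≠ 0) :
    coeff δ (Phi (Apt C2) f) = 0 := by
  apply coeff_eq_zero hf (Apt C2) δ 1 ![1,0,0] ![0,0,1] (δ 2) h2
  · rw [Fin.sum_univ_three]
    simp [h0, h1]
  · intro r hr i j hij
    fin_cases r
    · exact absurd h0 hr
    · exact absurd h1 hr
    · simp only [inv_one, Units.val_one, one_mul, mul_one] at hij
      have hA : Apt C2 ⟨2, by omega⟩ = A3 K := rfl
      rw [hA] at hij
      fin_cases i <;> fin_cases j <;> simp [A3, Matrix.vecHead, Matrix.vecTail] at hij ⊢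

lemma killAC [Infinite K] {f : MvPolynomial (Fin 3 × Fin 3 × Fin 3) K}
    (hf : f ∈ invRing K 3 3) (C2 : Matrix (Fin 3) (Fin 3) K) (δ : Fin 3 →₀ ℕ)
    (h0 : δ 0 = 1) (h1 : δ 1 = 0) (h2 : δ 2 = 1) :
    coeff δ (Phi (Apt C2) f) = 0 := by
  apply coeff_eq_zero hf (Apt C2) δ 1 ![2,1,0] ![-1,0,2] 1 one_ne_zero
  · rw [Fin.sum_univ_three]
    simp [h0, h1, h2]
  · intro r hr i j hij
    simp only [inv_one, Units.val_one, one_mul, mul_one] at hij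
    fin_cases r
    · have hA : Apt C2 ⟨0, by omega⟩ = A1 K := rfl
      rw [hA] at hij
      fin_cases i <;> fin_cases j <;> simp [A1, Matrix.vecHead, Matrix.vecTail] at hij ⊢
    · exact absurd h1 hr
    · have hA : Apt C2 ⟨2, by omega⟩ = A3 K := rfl
      rw [hA] at hij
      fin_cases i <;> fin_cases j <;> simp [A3, Matrix.vecHead, Matrix.vecTail] at hij ⊢

lemma coeff_zero_mul' (p q : MvPolynomial (Fin 3 × Fin 3 × Fin 3) K) :
    coeff 0 (p * q) = coeff 0 p * coeff 0 q := by
  simp [← constantCoeff_eq]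

lemma killPair [Infinite K] {C2 : Matrix (Fin 3) (Fin 3) K} (g : GL (Fin 3) K)
    (hg : (↑g : Matrix (Fin 3) (Fin 3) K) * C2 * (↑g⁻¹ : Matrix (Fin 3) (Fin 3) K) = E01 K)
    {x y : MvPolynomial (Fin 3 × Fin 3 × Fin 3) K}
    (hxi : x ∈ invRing K 3 3) (hyi : y ∈ invRing K 3 3)
    (hx0 : coeff 0 x = 0) (hy0 : coeff 0 y = 0)
    (d e : Fin 3 →₀ ℕ) (hde : d + e = mu) :
    coeff d (Phi (Apt C2) x) * coeff e (Phi (Apt C2) y) = 0 := by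
  have hv0 : d 0 + e 0 = 2 := by
    have := congrArg (fun m : Fin 3 →₀ ℕ => m 0) hde
    simpa [mu_apply0] using this
  have hv1 : d 1 + e 1 = 1 := by
    have := congrArg (fun m : Fin 3 →₀ ℕ => m 1) hde
    simpa [mu_apply1] using this
  have hv2 : d 2 + e 2 = 1 := by
    have := congrArg (fun m : Fin 3 →₀ ℕ => m 2) hde
    simpa [mu_apply2] using this
  have hd0 : d 0 = 0 ∨ d 0 = 1 ∨ d 0 = 2 := by omega
  have hd1 : d 1 = 0 ∨ d 1 = 1 := by omega
  have hd2 : d 2 = 0 ∨ d 2 = 1 := by omega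
  rcases hd0 with h|h|h <;> rcases hd1 with h'|h' <;> rcases hd2 with h''|h''
  -- (0,0,0) : d = 0
  · have hd : d = 0 := by
      ext r; fin_cases r <;> simpa
    rw [hd, phi_coeff_zero, hx0, zero_mul]
  -- (0,0,1) : kill x via C
  · rw [killC hxi C2 d h h' (by omega), zero_mul]
  -- (0,1,0) : kill x via B
  · rw [killB hxi g hg d h h'' (by omega), zero_mul]
  -- (0,1,1) : e = (2,0,0) kill y via A
  · rw [killA hyi C2 e (by omega) (by omega) (by omega), mul_zero]
  -- (1,0,0) : kill x via A
  · rw [killA hxi C2 d h' h'' (by omega), zero_mul]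
  -- (1,0,1) : kill x via AC
  · rw [killAC hxi C2 d h h' h'', zero_mul]
  -- (1,1,0) : e = (1,0,1) kill y via AC
  · rw [killAC hyi C2 e (by omega) (by omega) (by omega), mul_zero]
  -- (1,1,1) : e = (1,0,0) kill y via A
  · rw [killA hyi C2 e (by omega) (by omega) (by omega), mul_zero]
  -- (2,0,0) : kill x via A
  · rw [killA hxi C2 d h' h'' (by omega), zero_mul]
  -- (2,0,1) : e = (0,1,0) kill y via B
  · rw [killB hyi g hg e (by omega) (by omega) (by omega), mul_zero]
  -- (2,1,0) : e = (0,0,1) kill y via C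
  · rw [killC hyi C2 e (by omega) (by omega) (by omega), mul_zero]
  -- (2,1,1) : e = 0
  · have he : e = 0 := by
      ext r; fin_cases r <;> simp <;> omega
    rw [he, phi_coeff_zero, hy0, mul_zero]


lemma phi_word (A : Fin 3 → Matrix (Fin 3) (Fin 3) K) (w : List (Fin 3)) :
    ((w.map (genMat K 3 3)).prod).map (Phi A)
      = (w.map fun r => (X r : MvPolynomial (Fin 3) K)).prod
          • ((w.map A).prod).map (C : K →+* MvPolynomial (Fin 3) K) := by
  induction w with
  | nil =>
      simp only [List.map_nil, List.prod_nil, one_smul]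
      rw [Matrix.map_one (n := Fin 3) (⇑(Phi A)) (map_zero (Phi A)) (_root_.map_one (Phi A)),
        Matrix.map_one (n := Fin 3) (⇑(C : K →+* MvPolynomial (Fin 3) K)) (map_zero _)
          (_root_.map_one _)]
  | cons r w ih =>
      simp only [List.map_cons, List.prod_cons]
      rw [Matrix.map_mul, ih, Matrix.map_mul]
      have hG : (genMat K 3 3 r).map (Phi A)
          = (X r : MvPolynomial (Fin 3) K) • (A r).map (C : K →+* MvPolynomial (Fin 3) K) := by
        refine Matrix.ext fun i j => ?_
        simp only [genMat, Matrix.map_apply, Matrix.smul_apply, Matrix.of_apply, smul_eq_mul, Phi]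
        rw [eval₂Hom_X']
        exact mul_comm _ _
      rw [hG]
      exact smul_mul_smul_comm _ _ _ _

lemma trace_map_C (M : Matrix (Fin 3) (Fin 3) K) :
    trace (M.map (C : K →+* MvPolynomial (Fin 3) K)) = C (trace M) := by
  simp [Matrix.trace, Matrix.diag, Matrix.map_apply]

lemma phi_trace (A : Fin 3 → Matrix (Fin 3) (Fin 3) K)
    (M : Matrix (Fin 3) (Fin 3) (MvPolynomial (Fin 3 × Fin 3 × Fin 3) K)) :
    Phi A (trace M) = trace (M.map (Phi A)) := by
  simp [Matrix.trace, Matrix.diag, Matrix.map_apply, map_sum]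

lemma phi_trW (A : Fin 3 → Matrix (Fin 3) (Fin 3) K) (w : List (Fin 3)) :
    Phi A (trW K 3 3 w) = (w.map fun r => (X r : MvPolynomial (Fin 3) K)).prod
      * C (trace ((w.map A).prod)) := by
  rw [trW, phi_trace, phi_word, trace_smul, trace_map_C, smul_eq_mul]

lemma coeff_mu_X_word (t : K) :
    coeff mu (((([0,0,1,2] : List (Fin 3)).map fun r
      => (X r : MvPolynomial (Fin 3) K)).prod) * C t) = t := by
  have hX : ((([0,0,1,2] : List (Fin 3)).map fun r
      => (X r : MvPolynomial (Fin 3) K)).prod) = monomial mu 1 := by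
    simp only [List.map_cons, List.map_nil, List.prod_cons, List.prod_nil, mul_one]
    have : ∀ r : Fin 3, (X r : MvPolynomial (Fin 3) K) = monomial (Finsupp.single r 1) 1 := by
      intro r; rw [← X_pow_eq_monomial, pow_one]
    rw [this 0, this 1, this 2, monomial_mul, monomial_mul, monomial_mul]
    rw [show (1:K) * (1 * (1 * 1)) = 1 by ring]
    have hsum : (Finsupp.single (0:Fin 3) 1) + ((Finsupp.single (0:Fin 3) 1)
        + ((Finsupp.single (1:Fin 3) 1) + (Finsupp.single (2:Fin 3) 1))) = mu := by
      ext r; fin_cases r <;> simp [mu, Finsupp.single_apply]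
    rw [hsum]
  rw [hX, mul_comm, C_mul_monomial, mul_one, coeff_monomial, if_pos rfl]


lemma coeff_mu_X_word' (t : K) :
    coeff mu (((([0,0,2,1] : List (Fin 3)).map fun r
      => (X r : MvPolynomial (Fin 3) K)).prod) * C t) = t := by
  have hX : ((([0,0,2,1] : List (Fin 3)).map fun r
      => (X r : MvPolynomial (Fin 3) K)).prod) = monomial mu 1 := by
    simp only [List.map_cons, List.map_nil, List.prod_cons, List.prod_nil, mul_one]
    have hx : ∀ r : Fin 3, (X r : MvPolynomial (Fin 3) K) = monomial (Finsupp.single r 1) 1 := by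
      intro r; rw [← X_pow_eq_monomial, pow_one]
    rw [hx 0, hx 2, hx 1, monomial_mul, monomial_mul, monomial_mul]
    rw [show (1:K) * (1 * (1 * 1)) = 1 by ring]
    have hsum : (Finsupp.single (0:Fin 3) 1) + ((Finsupp.single (0:Fin 3) 1)
        + ((Finsupp.single (2:Fin 3) 1) + (Finsupp.single (1:Fin 3) 1))) = mu := by
      ext r; fin_cases r <;> simp [mu, Finsupp.single_apply]
    rw [hsum]
  rw [hX, mul_comm, C_mul_monomial, mul_one, coeff_monomial, if_pos rfl]

lemma tr_word1 (C2 : Matrix (Fin 3) (Fin 3) K) :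
    trace ((([0,0,1,2] : List (Fin 3)).map (Apt C2)).prod) = C2 0 0 := by
  simp only [List.map_cons, List.map_nil, List.prod_cons, List.prod_nil, mul_one]
  have h0 : Apt C2 0 = A1 K := rfl
  have h1 : Apt C2 1 = C2 := rfl
  have h2 : Apt C2 2 = A3 K := rfl
  rw [h0, h1, h2]
  simp [A1, A3, Matrix.trace, Matrix.diag, Matrix.mul_apply, Fin.sum_univ_three,
    Matrix.vecHead, Matrix.vecTail, Matrix.vecMul, dotProduct]

lemma tr_word2 (C2 : Matrix (Fin 3) (Fin 3) K) :
    trace ((([0,0,2,1] : List (Fin 3)).map (Apt C2)).prod) = C2 2 2 := by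
  simp only [List.map_cons, List.map_nil, List.prod_cons, List.prod_nil, mul_one]
  have h0 : Apt C2 0 = A1 K := rfl
  have h1 : Apt C2 1 = C2 := rfl
  have h2 : Apt C2 2 = A3 K := rfl
  rw [h0, h1, h2]
  simp [A1, A3, Matrix.trace, Matrix.diag, Matrix.mul_apply, Fin.sum_univ_three,
    Matrix.vecHead, Matrix.vecTail, Matrix.vecMul, dotProduct]

set_option synthInstance.maxHeartbeats 400000 in
lemma main_eval [Infinite K] {α β : K} (h0 : invRing K 3 3)
    (hmem : h0 ∈ decIdeal K 3 3)
    (hrepr : (h0 : MvPolynomial (Fin 3 × Fin 3 × Fin 3) K) =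
      C α * trW K 3 3 [0, 0, 1, 2] + C β * trW K 3 3 [0, 0, 2, 1])
    (C2 : Matrix (Fin 3) (Fin 3) K) (g : GL (Fin 3) K)
    (hg : (↑g : Matrix (Fin 3) (Fin 3) K) * C2 * (↑g⁻¹ : Matrix (Fin 3) (Fin 3) K) = E01 K) :
    α * C2 0 0 + β * C2 2 2 = 0 := by
  have e1 : coeff mu (Phi (Apt C2) (h0 : MvPolynomial (Fin 3 × Fin 3 × Fin 3) K))
      = α * C2 0 0 + β * C2 2 2 := by
    rw [hrepr, map_add, _root_.map_mul, _root_.map_mul, phi_trW, phi_trW]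
    have hCa : Phi (Apt C2) (C α) = C α := by simp [Phi]
    have hCb : Phi (Apt C2) (C β) = C β := by simp [Phi]
    rw [hCa, hCb, coeff_add, coeff_C_mul, coeff_C_mul, coeff_mu_X_word, coeff_mu_X_word',
      tr_word1, tr_word2]
  have e2 : coeff mu (Phi (Apt C2) (h0 : MvPolynomial (Fin 3 × Fin 3 × Fin 3) K)) = 0 := by
    rw [decIdeal, Ideal.span] at hmem
    obtain ⟨c, hsupp, hsum⟩ := Submodule.mem_span_set.mp hmem
    have hcoe : ((h0 : MvPolynomial (Fin 3 × Fin 3 × Fin 3) K))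
        = ∑ s ∈ c.support, ((c s : MvPolynomial (Fin 3 × Fin 3 × Fin 3) K)
            * (s : MvPolynomial (Fin 3 × Fin 3 × Fin 3) K)) := by
      rw [← hsum, Finsupp.sum, AddSubmonoidClass.coe_finset_sum]
      exact Finset.sum_congr rfl fun s _ => by rw [smul_eq_mul]; push_cast; ring
    rw [hcoe, map_sum, MvPolynomial.coeff_sum]
    apply Finset.sum_eq_zero
    intro s hs
    obtain ⟨a, ha, b, hb, hab⟩ := hsupp hs
    have hsplit : ((c s : MvPolynomial (Fin 3 × Fin 3 × Fin 3) K)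
          * (s : MvPolynomial (Fin 3 × Fin 3 × Fin 3) K))
        = ((c s * a : invRing K 3 3) : MvPolynomial (Fin 3 × Fin 3 × Fin 3) K)
          * (b : MvPolynomial (Fin 3 × Fin 3 × Fin 3) K) := by
      rw [hab]; push_cast; ring
    have hx0 : coeff 0 ((c s * a : invRing K 3 3) : MvPolynomial (Fin 3 × Fin 3 × Fin 3) K)
        = 0 := by
      have ha' : coeff 0 (a : MvPolynomial (Fin 3 × Fin 3 × Fin 3) K) = 0 := ha
      push_cast
      rw [coeff_zero_mul', ha', mul_zero]
    have hy0 : coeff 0 (b : MvPolynomial (Fin 3 × Fin 3 × Fin 3) K) = 0 := hb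
    rw [hsplit, _root_.map_mul, MvPolynomial.coeff_mul]
    apply Finset.sum_eq_zero
    intro de hde
    exact killPair g hg (c s * a).2 b.2 hx0 hy0 de.1 de.2 (Finset.HasAntidiagonal.mem_antidiagonal.mp hde)
  rw [← e1, e2]


def N1 (K : Type) [Field K] : Matrix (Fin 3) (Fin 3) K := !![1,-1,0; 1,-1,0; 0,0,0]
def N2 (K : Type) [Field K] : Matrix (Fin 3) (Fin 3) K := !![0,0,0; 0,-1,1; 0,-1,1]

def g1 (K : Type) [Field K] : GL (Fin 3) K :=
  ⟨!![0,1,0; 1,-1,0; 0,0,1], !![1,1,0; 1,0,0; 0,0,1],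
    by rw [Matrix.mul_fin_three, Matrix.one_fin_three]; norm_num,
    by rw [Matrix.mul_fin_three, Matrix.one_fin_three]; norm_num⟩

def g2 (K : Type) [Field K] : GL (Fin 3) K :=
  ⟨!![0,1,0; 0,-1,1; 1,0,0], !![0,0,1; 1,0,0; 1,1,0],
    by rw [Matrix.mul_fin_three, Matrix.one_fin_three]; norm_num,
    by rw [Matrix.mul_fin_three, Matrix.one_fin_three]; norm_num⟩

lemma hg1 : (↑(g1 K) : Matrix (Fin 3) (Fin 3) K) * N1 K
    * (↑(g1 K)⁻¹ : Matrix (Fin 3) (Fin 3) K) = E01 K := by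
  have hinv : (↑(g1 K)⁻¹ : Matrix (Fin 3) (Fin 3) K) = !![1,1,0; 1,0,0; 0,0,1] := rfl
  have hval : (↑(g1 K) : Matrix (Fin 3) (Fin 3) K) = !![0,1,0; 1,-1,0; 0,0,1] := rfl
  rw [hinv, hval, N1, E01, Matrix.mul_fin_three, Matrix.mul_fin_three]
  norm_num

lemma hg2 : (↑(g2 K) : Matrix (Fin 3) (Fin 3) K) * N2 K
    * (↑(g2 K)⁻¹ : Matrix (Fin 3) (Fin 3) K) = E01 K := by
  have hinv : (↑(g2 K)⁻¹ : Matrix (Fin 3) (Fin 3) K) = !![0,0,1; 1,0,0; 1,1,0] := rfl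
  have hval : (↑(g2 K) : Matrix (Fin 3) (Fin 3) K) = !![0,1,0; 0,-1,1; 1,0,0] := rfl
  rw [hinv, hval, N2, E01, Matrix.mul_fin_three, Matrix.mul_fin_three]
  norm_num

end LinIndepAux

/-- `tr(X₁²X₂X₃)` and `tr(X₁²X₃X₂)` are linearly independent modulo decomposable
invariants in `R_{3,3}`. -/
theorem linIndep_tr1123 (K : Type) [Field K] [Infinite K] (α β : K)
    (h : ∃ h ∈ decIdeal K 3 3, (h : MvPolynomial (Fin 3 × Fin 3 × Fin 3) K) =
      MvPolynomial.C α * trW K 3 3 [0, 0, 1, 2] + MvPolynomial.C β * trW K 3 3 [0, 0, 2, 1]) :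
    α = 0 ∧ β = 0 := by
  obtain ⟨h0, hmem, hrepr⟩ := h
  have hα := LinIndepAux.main_eval h0 hmem hrepr (LinIndepAux.N1 K) (LinIndepAux.g1 K)
    LinIndepAux.hg1
  have hβ := LinIndepAux.main_eval h0 hmem hrepr (LinIndepAux.N2 K) (LinIndepAux.g2 K)
    LinIndepAux.hg2
  constructor
  · simpa [LinIndepAux.N1, Matrix.vecHead, Matrix.vecTail] using hα
  · simpa [LinIndepAux.N2, Matrix.vecHead, Matrix.vecTail] using hβ
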